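/- The sequence V(1,2), defined greedily by starting with 1, 2 and repeatedly appending the smallest integer greater than all previous terms that can be written as a sum of two (not necessarily distinct) earlier terms in exactly one way, equals {2} together with all positive odd numbers. -/

import Mathlib

/-- Membership in the V-sequence generated by `a` and `b`: a number is in the
sequence iff it is a generator or it has exactly one representation as an
unordered sum `x + y` of two (not necessarily distinct) smaller elements of
the sequence. -/
def VMem (a b : ℕ) : ℕ → Prop := fun m =>
  Nat.strongRecOn (motive := fun _ => Prop) m (fun m ih =>
    m = a ∨ m = b ∨
      ∃! p : ℕ × ℕ, ∃ h1 : p.1 < m, ∃ h2 : p.2 < m,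
        p.1 ≤ p.2 ∧ ih p.1 h1 ∧ ih p.2 h2 ∧ p.1 + p.2 = m)

lemma vmem_iff (a b m : ℕ) : VMem a b m ↔
    (m = a ∨ m = b ∨
      ∃! p : ℕ × ℕ, ∃ h1 : p.1 < m, ∃ h2 : p.2 < m,
        p.1 ≤ p.2 ∧ VMem a b p.1 ∧ VMem a b p.2 ∧ p.1 + p.2 = m) := by
  show Nat.strongRecOn (motive := fun _ => Prop) m _ ↔ _
  rw [Nat.strongRecOn_eq]
  exact Iff.rfl

lemma vmem_one : VMem 1 2 1 := (vmem_iff 1 2 1).mpr (Or.inl rfl)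
lemma vmem_two : VMem 1 2 2 := (vmem_iff 1 2 2).mpr (Or.inr (Or.inl rfl))

lemma vmem_key : ∀ m : ℕ, VMem 1 2 m ↔ (m = 2 ∨ Odd m) := by
  intro m
  induction m using Nat.strong_induction_on with
  | _ m ih =>
  rw [vmem_iff]
  constructor
  · rintro (rfl | rfl | ⟨⟨x, y⟩, ⟨h1, h2, hxy, hx, hy, hs⟩, huniq⟩)
    · exact Or.inr ⟨0, rfl⟩
    · exact Or.inl rfl
    · simp only at h1 h2 hxy hs huniq
      have hx' : x = 2 ∨ Odd x := (ih x h1).mp hx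
      have hy' : y = 2 ∨ Odd y := (ih y h2).mp hy
      rcases Nat.even_or_odd m with hm | hm
      · -- m even: show m = 2, else contradiction via two representations
        left
        by_contra hm2
        obtain ⟨k, hk⟩ := hm
        have hx1 : 1 ≤ x := by
          rcases hx' with rfl | ⟨i, rfl⟩ <;> omega
        have hy1 : 1 ≤ y := by
          rcases hy' with rfl | ⟨i, rfl⟩ <;> omega
        have hm4 : 4 ≤ m := by
          -- m even, m ≥ 2 (since m = x + y ≥ 2), m ≠ 2
          omega
        rcases eq_or_lt_of_le hm4 with h4 | h6
        · -- m = 4 : representations (1,3) and (2,2)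
          have r1 := huniq (1, 3) ⟨by omega, by omega, by
            refine ⟨by norm_num, vmem_one, ?_, by omega⟩
            exact (ih 3 (by omega)).mpr (Or.inr ⟨1, rfl⟩)⟩
          have r2 := huniq (2, 2) ⟨by omega, by omega,
            ⟨le_refl 2, vmem_two, vmem_two, by omega⟩⟩
          exact absurd (congrArg Prod.fst (r1.trans r2.symm)) (by norm_num)
        · -- m ≥ 6 even : representations (1, m-1) and (3, m-3)
          have hmo : Odd (m - 1) := by
            refine ⟨k - 1, by omega⟩
          have hmo3 : Odd (m - 3) := by
            refine ⟨k - 2, by omega⟩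
          have r1 := huniq (1, m - 1) ⟨by omega, by omega, by
            refine ⟨by omega, vmem_one, ?_, by omega⟩
            exact (ih (m - 1) (by omega)).mpr (Or.inr hmo)⟩
          have r2 := huniq (3, m - 3) ⟨by omega, by omega, by
            refine ⟨by omega, ?_, ?_, by omega⟩
            · exact (ih 3 (by omega)).mpr (Or.inr ⟨1, rfl⟩)
            · exact (ih (m - 3) (by omega)).mpr (Or.inr hmo3)⟩
          exact absurd (congrArg Prod.fst (r1.trans r2.symm)) (by norm_num)
      · exact Or.inr hm
  · rintro (rfl | hm)
    · exact Or.inr (Or.inl rfl)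
    · obtain ⟨k, rfl⟩ := hm
      rcases Nat.eq_zero_or_pos k with rfl | hk
      · exact Or.inl rfl
      right; right
      rcases eq_or_lt_of_le (show 1 ≤ k by omega) with h1 | h2
      · -- m = 3 : unique representation (1, 2)
        subst h1
        refine ⟨(1, 2), ⟨by omega, by omega, by norm_num, vmem_one, vmem_two, by norm_num⟩, ?_⟩
        rintro ⟨x, y⟩ ⟨hx1, hy1, hxy, -, -, hs⟩
        simp only [Prod.mk.injEq] at hx1 hy1 hxy hs ⊢
        omega
      · -- m = 2k+1 ≥ 5 : unique representation (2, 2k-1)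
        have hk2 : 2 ≤ k := h2
        refine ⟨(2, 2 * k - 1), ⟨by omega, by omega, by omega, vmem_two, ?_, by omega⟩, ?_⟩
        · exact (ih (2 * k - 1) (by omega)).mpr (Or.inr ⟨k - 1, by omega⟩)
        · rintro ⟨x, y⟩ ⟨hx1, hy1, hxy, hx, hy, hs⟩
          simp only at hx1 hy1 hxy hs ⊢
          have hx' : x = 2 ∨ Odd x := (ih x hx1).mp hx
          have hy' : y = 2 ∨ Odd y := (ih y hy1).mp hy
          simp only [Prod.mk.injEq]
          rcases hx' with rfl | ⟨i, rfl⟩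
          · omega
          · rcases hy' with rfl | ⟨j, rfl⟩
            · omega
            · omega

theorem stmt_0 : {m : ℕ | VMem 1 2 m} = {m : ℕ | m = 2 ∨ Odd m} := by
  ext m
  simpa using vmem_key m
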